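/- Let φ : Ω → L(E) be strongly continuous generating the multiplication semigroup T_φ(t)s = e^{tφ(·)}s(·) on C_0(Ω, E), assumed to be a strongly continuous semigroup of bounded operators. Then the infinitesimal generator of (T_φ(t))_{t≥0} equals the multiplication operator (M_φ, D(M_φ)): for s ∈ C_0(Ω, E), the limit lim_{t↓0} (T_φ(t)s − s)/t exists in C_0(Ω, E) if and only if s ∈ D(M_φ) = { s : φ(·)s(·) ∈ C_0(Ω, E) }, in which case the limit equals φ(·)s(·). -/

import Mathlib

open ZeroAtInfty NormedSpace Filter Topology

/-- Pointwise derivative of `t ↦ exp(t • A) z` at `r`. -/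
lemma expApply_hasDerivAt {E : Type*} [NormedAddCommGroup E] [NormedSpace ℝ E]
    [CompleteSpace E] (A : E →L[ℝ] E) (z : E) (r : ℝ) :
    HasDerivAt (fun t : ℝ => exp (t • A) z) (exp (r • A) (A z)) r := by
  have h := hasDerivAt_exp_smul_const (𝕂 := ℝ) A r
  have h2 := ((ContinuousLinearMap.apply ℝ E z).hasFDerivAt.comp_hasDerivAt r h)
  simpa [ContinuousLinearMap.mul_apply, Function.comp_def] using h2

/-- The infinitesimal generator of the multiplication semigroup
`T_φ(t)s = e^{tφ(·)}s(·)` on `C₀(Ω, E)` is the multiplication operator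
`(M_φ, D(M_φ))`: for `s ∈ C₀(Ω, E)` the limit `lim_{t↓0} (T_φ(t)s − s)/t` exists in
`C₀(Ω, E)` iff `s ∈ D(M_φ)`, in which case the limit equals `φ(·)s(·)`. -/
theorem multiplication_semigroup_generator (Ω E : Type*) [TopologicalSpace Ω]
    [LocallyCompactSpace Ω] [T2Space Ω] [NormedAddCommGroup E] [NormedSpace ℝ E]
    [CompleteSpace E] (φ : Ω → (E →L[ℝ] E)) (hφ : ∀ z : E, Continuous fun x => φ x z)
    (T : ℝ → C₀(Ω, E) →L[ℝ] C₀(Ω, E))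
    (hT : ∀ t : ℝ, 0 ≤ t → ∀ s : C₀(Ω, E), ∀ x, T t s x = exp (t • φ x) (s x))
    (hsc : ∀ s : C₀(Ω, E), Tendsto (fun t : ℝ => T t s) (𝓝[>] 0) (𝓝 s)) :
    ∀ s : C₀(Ω, E),
      ((∃ L : C₀(Ω, E),
          Tendsto (fun t : ℝ => t⁻¹ • (T t s - s)) (𝓝[>] 0) (𝓝 L)) ↔
        (∃ u : C₀(Ω, E), ∀ x, u x = φ x (s x))) ∧
      (∀ u : C₀(Ω, E), (∀ x, u x = φ x (s x)) →
        Tendsto (fun t : ℝ => t⁻¹ • (T t s - s)) (𝓝[>] 0) (𝓝 u)) := by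
  intro s
  -- Main analytic claim: if u = φ(·)s(·) belongs to C₀, then the difference quotient
  -- converges to u in sup norm.
  have main : ∀ u : C₀(Ω, E), (∀ x, u x = φ x (s x)) →
      Tendsto (fun t : ℝ => t⁻¹ • (T t s - s)) (𝓝[>] 0) (𝓝 u) := by
    intro u hu
    rw [Metric.tendsto_nhdsWithin_nhds]
    intro ε hε
    -- get δ from strong continuity at u
    obtain ⟨δ, hδ0, hδ⟩ := (Metric.tendsto_nhdsWithin_nhds).1 (hsc u) (ε / 2) (by linarith)
    refine ⟨δ, hδ0, ?_⟩
    intro t ht hdist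
    have ht0 : 0 < t := ht
    rw [Real.dist_eq, sub_zero, abs_of_pos ht0] at hdist
    -- the norm bound, pointwise
    have key : ∀ x, ‖(t⁻¹ • (T t s - s) - u) x‖ ≤ ε / 2 := by
      intro x
      have hux : u x = φ x (s x) := hu x
      -- g r = exp (r • φ x) (s x) - r • u x  has derivative exp (r • φ x) (u x) - u x
      set g : ℝ → E := fun r => exp (r • φ x) (s x) - r • u x with hg
      have hderiv : ∀ r ∈ Set.Icc (0 : ℝ) t,
          HasDerivWithinAt g (exp (r • φ x) (u x) - u x) (Set.Icc (0 : ℝ) t) r := by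
        intro r _
        have h1 := expApply_hasDerivAt (φ x) (s x) r
        have h2 : HasDerivAt (fun r : ℝ => r • u x) (u x) r := by
          simpa using (hasDerivAt_id r).smul_const (u x)
        have h3 := (h1.sub h2).hasDerivWithinAt (s := Set.Icc (0:ℝ) t)
        rwa [← hux] at h3
      have hbound : ∀ r ∈ Set.Icc (0 : ℝ) t,
          ‖exp (r • φ x) (u x) - u x‖ ≤ ε / 2 := by
        intro r hr
        rcases eq_or_lt_of_le hr.1 with h0 | h0
        · simp [← h0, exp_zero]
          linarith
        · have hr0 : 0 ≤ r := le_of_lt h0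
          have hTr : T r u x = exp (r • φ x) (u x) := hT r hr0 u x
          have h3 : ‖exp (r • φ x) (u x) - u x‖ = ‖(T r u - u) x‖ := by
            simp [hTr]
          rw [h3]
          have h4 : ‖(T r u - u) x‖ ≤ ‖T r u - u‖ := by
            rw [← ZeroAtInftyContinuousMap.norm_toBCF_eq_norm]
            exact BoundedContinuousFunction.norm_coe_le_norm (T r u - u).toBCF x
          have h5 : dist (T r u) u < ε / 2 := by
            apply hδ h0
            rw [Real.dist_eq, sub_zero, abs_of_pos h0]
            exact lt_of_le_of_lt hr.2 hdist
          rw [dist_eq_norm] at h5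
          exact h4.trans (le_of_lt h5)
      have hmvt := Convex.norm_image_sub_le_of_norm_hasDerivWithin_le hderiv hbound
        (convex_Icc 0 t) (Set.left_mem_Icc.2 (le_of_lt ht0)) (Set.right_mem_Icc.2 (le_of_lt ht0))
      -- g t - g 0 = exp (t • φ x) (s x) - t • u x - s x
      have hg0 : g 0 = s x := by simp [hg, exp_zero]
      have hgt : g t = exp (t • φ x) (s x) - t • u x := rfl
      rw [hgt, hg0, Real.norm_eq_abs, sub_zero, abs_of_pos ht0] at hmvt
      have hTt : T t s x = exp (t • φ x) (s x) := hT t (le_of_lt ht0) s x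
      have hcoe : (t⁻¹ • (T t s - s) - u) x
          = t⁻¹ • (exp (t • φ x) (s x) - s x) - u x := by
        simp [hTt]
      rw [hcoe]
      have heq : t⁻¹ • (exp (t • φ x) (s x) - s x) - u x
          = t⁻¹ • (exp (t • φ x) (s x) - t • u x - s x) := by
        have htne : t ≠ 0 := ne_of_gt ht0
        match_scalars <;> field_simp
      rw [heq, norm_smul, Real.norm_eq_abs, abs_of_pos (inv_pos.2 ht0)]
      calc t⁻¹ * ‖exp (t • φ x) (s x) - t • u x - s x‖
          ≤ t⁻¹ * (ε / 2 * t) := by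
            apply mul_le_mul_of_nonneg_left hmvt (le_of_lt (inv_pos.2 ht0))
        _ = ε / 2 := by field_simp
    -- conclude from pointwise bound
    rw [dist_eq_norm]
    have : ‖t⁻¹ • (T t s - s) - u‖ ≤ ε / 2 := by
      rw [← ZeroAtInftyContinuousMap.norm_toBCF_eq_norm]
      exact (BoundedContinuousFunction.norm_le (by linarith)).2 key
    linarith
  refine ⟨⟨?_, fun ⟨u, hu⟩ => ⟨u, main u hu⟩⟩, main⟩
  -- forward direction: if the limit L exists then L = φ(·)s(·)
  rintro ⟨L, hL⟩
  refine ⟨L, fun x => ?_⟩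
  -- pointwise convergence of the difference quotient to φ x (s x)
  have hpt : Tendsto (fun t : ℝ => t⁻¹ • (exp (t • φ x) (s x) - s x)) (𝓝[>] 0)
      (𝓝 (φ x (s x))) := by
    have h1 := expApply_hasDerivAt (φ x) (s x) 0
    simp only [zero_smul, exp_zero, ContinuousLinearMap.one_apply] at h1
    rw [hasDerivAt_iff_tendsto_slope] at h1
    have h2 := h1.mono_left (nhdsWithin_mono 0 (fun y hy => ne_of_gt hy))
    exact h2.congr fun t => by simp [slope_def_module, exp_zero]
  -- evaluation at x is continuous, so (quotient) x → L x
  have hLx : Tendsto (fun t : ℝ => (t⁻¹ • (T t s - s) : C₀(Ω, E)) x) (𝓝[>] 0) (𝓝 (L x)) := by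
    have hev : Continuous fun f : C₀(Ω, E) => f x := by
      apply Metric.continuous_iff.2
      intro f ε hε
      refine ⟨ε, hε, fun g hg => ?_⟩
      calc dist (g x) (f x) ≤ dist g f := by
            rw [dist_eq_norm, dist_eq_norm, ← ZeroAtInftyContinuousMap.norm_toBCF_eq_norm]
            exact BoundedContinuousFunction.norm_coe_le_norm (g.toBCF - f.toBCF) x
        _ < ε := hg
    exact (hev.tendsto L).comp hL
  -- on 𝓝[>] 0 the two functions agree
  have heq : ∀ᶠ t : ℝ in 𝓝[>] 0,
      (t⁻¹ • (T t s - s) : C₀(Ω, E)) x = t⁻¹ • (exp (t • φ x) (s x) - s x) := by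
    filter_upwards [self_mem_nhdsWithin] with t ht
    simp [hT t (le_of_lt ht) s x]
  have hLx' : Tendsto (fun t : ℝ => t⁻¹ • (exp (t • φ x) (s x) - s x)) (𝓝[>] 0)
      (𝓝 (L x)) := hLx.congr' heq
  exact tendsto_nhds_unique hLx' hpt
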